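/- Let A, B be positive bounded operators on a complex Hilbert space and r ≥ 1. Then ‖((A+B)/2)^r‖ ≤ (1/2)‖A^r + B^r‖, where ‖·‖ is the operator norm. -/

import Mathlib

set_option synthInstance.maxHeartbeats 1000000
set_option maxHeartbeats 1000000

open scoped NNReal

/-- Scalar tangent line inequality for `t ^ r` at `l`. -/
lemma tangent_rpow {t l r : ℝ} (ht : 0 ≤ t) (hl : 0 ≤ l) (hr : 1 ≤ r) :
    r * l ^ (r - 1) * t + (1 - r) * l ^ r ≤ t ^ r := by
  rcases eq_or_lt_of_le hl with h0 | hl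
  · rcases eq_or_lt_of_le hr with h1 | h1
    · simp [← h0, ← h1]
    · have e1 : (0 : ℝ) ^ (r - 1) = 0 := Real.zero_rpow (by linarith)
      have e2 : (0 : ℝ) ^ r = 0 := Real.zero_rpow (by linarith)
      rw [← h0, e1, e2]
      simpa using Real.rpow_nonneg ht r
  · set s : ℝ := t / l - 1 with hs_def
    have hs : (-1 : ℝ) ≤ s := by
      have : 0 ≤ t / l := div_nonneg ht hl.le
      simp [hs_def]; linarith
    have key := one_add_mul_self_le_rpow_one_add hs hr
    have h1s : 1 + s = t / l := by ring
    have hlr : 0 < l ^ r := Real.rpow_pos_of_pos hl r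
    have htl : (1 + s) ^ r = t ^ r / l ^ r := by
      rw [h1s, Real.div_rpow ht hl.le]
    have hsub : l ^ (r - 1) = l ^ r / l := by
      rw [Real.rpow_sub hl, Real.rpow_one]
    have key2 : l ^ r * (1 + r * s) ≤ t ^ r := by
      have := mul_le_mul_of_nonneg_left key hlr.le
      rwa [htl, mul_div_cancel₀ _ (ne_of_gt hlr)] at this
    have hl0 : l ≠ 0 := ne_of_gt hl
    calc r * l ^ (r - 1) * t + (1 - r) * l ^ r
        = l ^ r * (1 + r * s) := by
          rw [hsub, hs_def]; field_simp; ring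
      _ ≤ t ^ r := key2

section OperatorLemmas

variable {H : Type*} [NormedAddCommGroup H] [InnerProductSpace ℂ H] [CompleteSpace H]

/-- `CFC.rpow` as a real `cfc`. -/
lemma rpow_eq_cfc_real (A : H →L[ℂ] H) (hA : 0 ≤ A) (r : ℝ) (hr : 0 < r) :
    CFC.rpow A r = cfc (fun t : ℝ => t ^ r) A := by
  rw [show CFC.rpow A r = cfc (fun x : ℝ≥0 => x ^ r) A from rfl,
    cfc_nnreal_eq_real _ _ hA]
  apply cfc_congr
  intro x hx
  have hx0 : 0 ≤ x := spectrum_nonneg_of_nonneg hA hx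
  simp [NNReal.coe_rpow, Real.coe_toNNReal x hx0]

lemma affine_cfc (A : H →L[ℂ] H) (hA : IsSelfAdjoint A) (c d : ℝ) :
    cfc (fun t : ℝ => c * t + d) A = c • A + algebraMap ℝ (H →L[ℂ] H) d := by
  rw [cfc_add (a := A) (fun t : ℝ => c * t) (fun _ : ℝ => d) (by fun_prop) (by fun_prop),
    cfc_const_mul_id c A hA, cfc_const d A hA]

lemma tangent_op (A : H →L[ℂ] H) (hA : 0 ≤ A) (r l : ℝ) (hr : 1 ≤ r) (hl : 0 ≤ l) :
    (r * l ^ (r - 1)) • A + algebraMap ℝ (H →L[ℂ] H) ((1 - r) * l ^ r) ≤ CFC.rpow A r := by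
  have hsa : IsSelfAdjoint A := .of_nonneg hA
  have hr0 : (0 : ℝ) < r := lt_of_lt_of_le one_pos hr
  rw [rpow_eq_cfc_real A hA r hr0, ← affine_cfc A hsa]
  exact cfc_mono (fun x hx => tangent_rpow (spectrum_nonneg_of_nonneg hA hx) hl hr)
    (by fun_prop) ((Real.continuous_rpow_const hr0.le).continuousOn)

end OperatorLemmas

theorem stmt_15 {H : Type*} [NormedAddCommGroup H] [InnerProductSpace ℂ H] [CompleteSpace H]
    (A B : H →L[ℂ] H) (hA : 0 ≤ A) (hB : 0 ≤ B) (r : ℝ) (hr : 1 ≤ r) :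
    ‖CFC.rpow ((1 / 2 : ℝ) • (A + B)) r‖ ≤
      (1 / 2) * ‖CFC.rpow A r + CFC.rpow B r‖ := by
  rcases subsingleton_or_nontrivial (H →L[ℂ] H) with hsub | hnt
  · have h1 : CFC.rpow ((1 / 2 : ℝ) • (A + B)) r = 0 := Subsingleton.elim _ _
    rw [h1, norm_zero]
    positivity
  · set C : H →L[ℂ] H := (1 / 2 : ℝ) • (A + B) with hCdef
    have hAB : 0 ≤ A + B := add_nonneg hA hB
    have hABsa : IsSelfAdjoint (A + B) := .of_nonneg hAB
    have hC : 0 ≤ C := by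
      rw [hCdef, ← cfc_const_mul_id (R := ℝ) (1 / 2 : ℝ) (A + B) hABsa]
      exact cfc_nonneg fun x hx => by
        have := spectrum_nonneg_of_nonneg hAB hx
        positivity
    have hCsa : IsSelfAdjoint C := .of_nonneg hC
    have hr0 : (0 : ℝ) < r := lt_of_lt_of_le one_pos hr
    set D : H →L[ℂ] H := CFC.rpow A r + CFC.rpow B r with hDdef
    have hD : 0 ≤ D := add_nonneg CFC.rpow_nonneg CFC.rpow_nonneg
    have hDsa : IsSelfAdjoint D := .of_nonneg hD
    set l : ℝ := ‖C‖ with hldef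
    have hl : (0 : ℝ) ≤ l := norm_nonneg C
    -- Step A : ‖C ^ r‖ ≤ ‖C‖ ^ r
    have stepA : ‖CFC.rpow C r‖ ≤ l ^ r := by
      have h1 : CFC.rpow C r ≤ algebraMap ℝ (H →L[ℂ] H) (l ^ r) := by
        rw [rpow_eq_cfc_real C hC r hr0]
        calc cfc (fun t : ℝ => t ^ r) C ≤ cfc (fun _ : ℝ => l ^ r) C := by
              refine cfc_mono (fun x hx => ?_)
                ((Real.continuous_rpow_const hr0.le).continuousOn) (by fun_prop)
              have hx0 := spectrum_nonneg_of_nonneg hC hx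
              exact Real.rpow_le_rpow hx0
                ((Real.le_norm_self x).trans (spectrum.norm_le_norm_of_mem hx)) hr0.le
          _ = algebraMap ℝ (H →L[ℂ] H) (l ^ r) := cfc_const _ _ hCsa
      exact (CStarAlgebra.norm_le_iff_le_algebraMap _ (Real.rpow_nonneg hl r)
        CFC.rpow_nonneg).mpr h1
    -- Step B : 2 * ‖C‖ ^ r ≤ ‖D‖
    have hmem : l ∈ spectrum ℝ C := CStarAlgebra.norm_mem_spectrum_of_nonneg hC
    have hsum := add_le_add (tangent_op A hA r l hr hl) (tangent_op B hB r l hr hl)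
    have h2C : A + B = (2 : ℝ) • C := by
      rw [hCdef, smul_smul]
      norm_num
    have lhs_eq : (2 * (r * l ^ (r - 1))) • C
          + algebraMap ℝ (H →L[ℂ] H) (2 * ((1 - r) * l ^ r))
        = ((r * l ^ (r - 1)) • A + algebraMap ℝ (H →L[ℂ] H) ((1 - r) * l ^ r))
          + ((r * l ^ (r - 1)) • B + algebraMap ℝ (H →L[ℂ] H) ((1 - r) * l ^ r)) := by
      rw [two_mul ((1 - r) * l ^ r), map_add, mul_comm (2 : ℝ) (r * l ^ (r - 1)), mul_smul,
        ← h2C, smul_add]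
      abel
    have hE : cfc (fun t : ℝ => (2 * (r * l ^ (r - 1))) * t + 2 * ((1 - r) * l ^ r)) C
        ≤ algebraMap ℝ (H →L[ℂ] H) ‖D‖ := by
      rw [affine_cfc C hCsa, lhs_eq]
      exact hsum.trans hDsa.le_algebraMap_norm_self
    have hspec : (2 * (r * l ^ (r - 1))) * l + 2 * ((1 - r) * l ^ r)
        ∈ spectrum ℝ (cfc (fun t : ℝ => (2 * (r * l ^ (r - 1))) * t + 2 * ((1 - r) * l ^ r)) C) := by
      rw [cfc_map_spectrum (R := ℝ) (a := C)
        (f := fun t : ℝ => (2 * (r * l ^ (r - 1))) * t + 2 * ((1 - r) * l ^ r)) hCsa (by fun_prop)]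
      exact ⟨l, hmem, rfl⟩
    have hle2 := (le_algebraMap_iff_spectrum_le (cfc_predicate _ C)).mp hE _ hspec
    have hpow : l ^ (r - 1) * l = l ^ r := by
      rcases eq_or_lt_of_le hl with h0 | h0
      · rw [← h0, Real.zero_rpow (ne_of_gt hr0)]
        ring
      · calc l ^ (r - 1) * l = l ^ (r - 1) * l ^ (1 : ℝ) := by rw [Real.rpow_one]
          _ = l ^ (r - 1 + 1) := (Real.rpow_add h0 _ _).symm
          _ = l ^ r := by ring_nf
    have hgl : (2 * (r * l ^ (r - 1))) * l + 2 * ((1 - r) * l ^ r) = 2 * l ^ r := by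
      calc (2 * (r * l ^ (r - 1))) * l + 2 * ((1 - r) * l ^ r)
          = 2 * r * (l ^ (r - 1) * l) + 2 * l ^ r - 2 * r * l ^ r := by ring
        _ = 2 * l ^ r := by rw [hpow]; ring
    rw [hgl] at hle2
    calc ‖CFC.rpow C r‖ ≤ l ^ r := stepA
      _ ≤ 1 / 2 * ‖D‖ := by linarith
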